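/- Let F = x^a y^α z^β + x^b be a homogeneous reduced polynomial in K[x_1,...,x_n,y,z] with α, β > 0 and deg(x^a) + α + β = deg(x^b). Then F is NOT a free divisor: its Jacobian ideal J(F) is not perfect of codimension 2. -/

import Mathlib

open MvPolynomial

namespace Stmt15

variable {K : Type*} [Field K] {σ : Type*}

lemma deg_add (s t : σ →₀ ℕ) : (s + t).degree = s.degree + t.degree := by
  simp only [Finsupp.degree_eq_weight_one, map_add]

lemma deg_single (v : σ) (k : ℕ) : (Finsupp.single v k).degree = k := by
  classical
  rcases eq_or_ne k 0 with h | h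
  · simp [h]
  · exact Finsupp.degree_single v k

lemma sub_single_add {s : σ →₀ ℕ} {v : σ} (h : s v ≠ 0) :
    s - Finsupp.single v 1 + Finsupp.single v 1 = s := by
  classical
  ext w
  by_cases hw : w = v
  · subst hw
    simp only [Finsupp.add_apply, Finsupp.tsub_apply, Finsupp.single_eq_same]
    omega
  · simp [Finsupp.add_apply, Finsupp.tsub_apply, Finsupp.single_eq_of_ne' (Ne.symm hw)]

lemma deg_sub_single {s : σ →₀ ℕ} {v : σ} (h : s v ≠ 0) :
    (s - Finsupp.single v 1).degree + 1 = s.degree := by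
  conv_rhs => rw [← sub_single_add h]
  rw [deg_add, deg_single]

lemma degree_eq_sum (s : σ →₀ ℕ) : (s.sum fun _ e => e) = s.degree := rfl

lemma coeff_pderiv [DecidableEq σ] (v : σ) (p : MvPolynomial σ K) (d : σ →₀ ℕ) :
    coeff d (pderiv v p) = ((d v + 1 : ℕ) : K) * coeff (d + Finsupp.single v 1) p := by
  induction p using MvPolynomial.induction_on' with
  | add p q ihp ihq => simp [ihp, ihq, mul_add]
  | monomial u a =>
    rw [pderiv_monomial, coeff_monomial, coeff_monomial]
    rcases Nat.eq_zero_or_pos (u v) with h | h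
    · have h2 : ¬ (u = d + Finsupp.single v 1) := by
        intro he
        have := congrArg (fun f => f v) he
        simp only [Finsupp.add_apply, Finsupp.single_eq_same] at this
        omega
      rw [if_neg h2, h]
      simp
    · by_cases he : u = d + Finsupp.single v 1
      · have h3 : u - Finsupp.single v 1 = d := by
          rw [he]
          ext w
          by_cases hw : w = v
          · subst hw
            simp only [Finsupp.tsub_apply, Finsupp.add_apply, Finsupp.single_eq_same]
            omega
          · simp [Finsupp.tsub_apply, Finsupp.add_apply,
              Finsupp.single_eq_of_ne (Ne.symm hw)]
        have h4 : u v = d v + 1 := by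
          have := congrArg (fun f => f v) he
          simpa only [Finsupp.add_apply, Finsupp.single_eq_same] using this
        rw [if_pos h3, if_pos he, h4]
        push_cast
        ring
      · have h5 : ¬ (u - Finsupp.single v 1 = d) := by
          intro hd
          apply he
          rw [← hd, sub_single_add (by omega)]
        rw [if_neg h5, if_neg he, mul_zero]

lemma exists_degree_eq_totalDegree (p : MvPolynomial σ K) (hp : p ≠ 0) :
    ∃ d ∈ p.support, d.degree = p.totalDegree := by
  obtain ⟨d, hd, he⟩ := Finset.exists_mem_eq_sup p.support
    (MvPolynomial.support_nonempty.mpr hp) (fun m => m.sum fun _ e => e)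
  exact ⟨d, hd, by rw [← degree_eq_sum, MvPolynomial.totalDegree, he]⟩

lemma coeff_eq_zero_of_lt {p : MvPolynomial σ K} {d : σ →₀ ℕ}
    (h : p.totalDegree < d.degree) : coeff d p = 0 := by
  apply coeff_eq_zero_of_totalDegree_lt
  exact h

lemma le_totalDegree' {p : MvPolynomial σ K} {d : σ →₀ ℕ} (h : d ∈ p.support) :
    d.degree ≤ p.totalDegree := by
  have := MvPolynomial.le_totalDegree h
  simpa only [degree_eq_sum] using this

lemma totalDegree_add_le_mul (f g : MvPolynomial σ K) (hf : f ≠ 0) (hg : g ≠ 0) :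
    f.totalDegree + g.totalDegree ≤ (f * g).totalDegree := by
  classical
  set df := f.totalDegree with hdf
  set dg := g.totalDegree with hdg
  set cf := homogeneousComponent df f with hcf
  set cg := homogeneousComponent dg g with hcg
  have hcfne : cf ≠ 0 := by
    obtain ⟨d, hd, he⟩ := exists_degree_eq_totalDegree f hf
    have h1 : coeff d cf = coeff d f := by
      rw [hcf, coeff_homogeneousComponent, if_pos he]
    intro h0
    rw [h0, coeff_zero] at h1
    exact MvPolynomial.mem_support_iff.mp hd h1.symm
  have hcgne : cg ≠ 0 := by
    obtain ⟨d, hd, he⟩ := exists_degree_eq_totalDegree g hg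
    have h1 : coeff d cg = coeff d g := by
      rw [hcg, coeff_homogeneousComponent, if_pos he]
    intro h0
    rw [h0, coeff_zero] at h1
    exact MvPolynomial.mem_support_iff.mp hd h1.symm
  have hkey : homogeneousComponent (df + dg) (f * g) = cf * cg := by
    apply MvPolynomial.ext; intro d
    rw [coeff_homogeneousComponent]
    by_cases hd : d.degree = df + dg
    · rw [if_pos hd, coeff_mul, coeff_mul]
      apply Finset.sum_congr rfl
      rintro ⟨p₁, p₂⟩ hmem
      have hps : p₁ + p₂ = d := Finset.HasAntidiagonal.mem_antidiagonal.mp hmem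
      have hdeg : p₁.degree + p₂.degree = df + dg := by rw [← deg_add, hps, hd]
      simp only [hcf, hcg, coeff_homogeneousComponent]
      by_cases h1 : p₁.degree = df
      · have h2 : p₂.degree = dg := by omega
        rw [if_pos h1, if_pos h2]
      · rcases lt_or_gt_of_ne h1 with hlt | hgt
        · have h2 : dg < p₂.degree := by omega
          rw [coeff_eq_zero_of_lt h2, if_neg h1, if_neg (show ¬p₂.degree = dg by omega)]
          ring
        · rw [coeff_eq_zero_of_lt hgt, if_neg h1]
          ring
    · rw [if_neg hd]
      have hh : (cf * cg).IsHomogeneous (df + dg) :=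
        (homogeneousComponent_isHomogeneous df f).mul (homogeneousComponent_isHomogeneous dg g)
      exact (hh.coeff_eq_zero hd).symm
  have hne : homogeneousComponent (df + dg) (f * g) ≠ 0 := by
    rw [hkey]; exact mul_ne_zero hcfne hcgne
  obtain ⟨d, hd⟩ := MvPolynomial.ne_zero_iff.mp hne
  rw [coeff_homogeneousComponent] at hd
  by_cases hdd : d.degree = df + dg
  · rw [if_pos hdd] at hd
    have := le_totalDegree' (MvPolynomial.mem_support_iff.mpr hd)
    omega
  · rw [if_neg hdd] at hd; exact absurd rfl hd

lemma exists_not_dvd_pderiv [CharZero K] (p : MvPolynomial σ K) (hp : Prime p) :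
    ∃ v, ¬ p ∣ pderiv v p := by
  classical
  have hp0 : p ≠ 0 := hp.ne_zero
  have htd : p.totalDegree ≠ 0 := by
    intro h
    apply hp.not_unit
    have hC : p = C (coeff 0 p) := by
      apply MvPolynomial.ext; intro d
      rcases eq_or_ne d 0 with rfl | hd0
      · simp
      · rw [coeff_C, if_neg (Ne.symm hd0)]
        by_contra hc
        have hmem := MvPolynomial.mem_support_iff.mpr hc
        have hall := (MvPolynomial.totalDegree_eq_zero_iff σ p).mp h d hmem
        exact hd0 (Finsupp.ext fun w => hall w)
    have hc0 : coeff 0 p ≠ 0 := by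
      intro h0; apply hp0; rw [hC, h0, map_zero]
    rw [hC]
    exact (isUnit_iff_ne_zero.mpr hc0).map C
  obtain ⟨d, hd, he⟩ := exists_degree_eq_totalDegree p hp0
  have hdpos : d.degree ≠ 0 := by omega
  have hv : ∃ v, d v ≠ 0 := by
    by_contra hall
    push_neg at hall
    exact hdpos (by rw [show d = 0 from Finsupp.ext fun w => hall w]; simp)
  obtain ⟨v, hdv⟩ := hv
  refine ⟨v, fun hdvd => ?_⟩
  have hpd0 : pderiv v p ≠ 0 := by
    have hco := coeff_pderiv v p (d - Finsupp.single v 1)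
    rw [sub_single_add hdv] at hco
    intro h0
    rw [h0, coeff_zero] at hco
    have h1 : coeff d p ≠ 0 := MvPolynomial.mem_support_iff.mp hd
    exact mul_ne_zero (Nat.cast_ne_zero.mpr (Nat.succ_ne_zero _)) h1 hco.symm
  obtain ⟨h, hh⟩ := hdvd
  have hhne : h ≠ 0 := by rintro rfl; rw [mul_zero] at hh; exact hpd0 hh
  have h1 : p.totalDegree ≤ (pderiv v p).totalDegree := by
    rw [hh]
    exact le_trans (Nat.le_add_right _ _) (totalDegree_add_le_mul p h hp0 hhne)
  have h2 : (pderiv v p).totalDegree < p.totalDegree := by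
    have hle : ∀ e ∈ (pderiv v p).support, (e.sum fun _ n => n) ≤ p.totalDegree - 1 := by
      intro e hesupp
      have hco := coeff_pderiv v p e
      have hne := MvPolynomial.mem_support_iff.mp hesupp
      rw [hco] at hne
      have hcoe : coeff (e + Finsupp.single v 1) p ≠ 0 := by
        intro h0; rw [h0, mul_zero] at hne; exact hne rfl
      have hmem := le_totalDegree' (MvPolynomial.mem_support_iff.mpr hcoe)
      rw [deg_add, deg_single] at hmem
      rw [degree_eq_sum]
      omega
    have := Finset.sup_le hle
    rw [← MvPolynomial.totalDegree] at this
    omega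
  omega

lemma homogeneousComponent_mul_eq_zero {k j : ℕ} (p g : MvPolynomial σ K)
    (hp : p.IsHomogeneous k) (h : j < k) : homogeneousComponent j (p * g) = 0 := by
  classical
  apply homogeneousComponent_eq_zero'
  intro d hd
  have hmem := MvPolynomial.support_mul p g hd
  rw [Finset.mem_add] at hmem
  obtain ⟨d₁, hd₁, d₂, hd₂, rfl⟩ := hmem
  have h1 : d₁.degree = k := by
    have h2 := MvPolynomial.mem_support_iff.mp hd₁
    by_contra hne
    exact h2 (hp.coeff_eq_zero hne)
  rw [deg_add]
  omega

set_option synthInstance.maxHeartbeats 1000000 in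
set_option maxHeartbeats 1000000 in
lemma key_dvd_det [CharZero K] [Fintype σ] [DecidableEq σ] {F : MvPolynomial σ K}
    (hsq : Squarefree F) (M : Matrix σ σ (MvPolynomial σ K))
    (hM : ∀ j, F ∣ ∑ v, pderiv v F * M v j) : F ∣ M.det := by
  classical
  have hstep : ∀ p : MvPolynomial σ K, Prime p → p ∣ F → p ∣ M.det := by
    intro p hp hpF
    obtain ⟨g, hFg⟩ := hpF
    have hpg : ¬ p ∣ g := by
      intro hd
      exact hp.not_unit (hsq p (by rw [hFg]; exact mul_dvd_mul_left p hd))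
    have hT : ∀ j, p ∣ ∑ v, pderiv v p * M v j := by
      intro j
      have h1 : p ∣ ∑ v, pderiv v F * M v j := (dvd_mul_right p g).trans (hFg ▸ hM j)
      have h2 : ∑ v, pderiv v F * M v j
          = g * (∑ v, pderiv v p * M v j) + p * (∑ v, pderiv v g * M v j) := by
        rw [Finset.mul_sum, Finset.mul_sum, ← Finset.sum_add_distrib]
        apply Finset.sum_congr rfl; intro v _
        rw [hFg, pderiv_mul]; ring
      have h3 : p ∣ g * (∑ v, pderiv v p * M v j) := by
        have h4 : g * (∑ v, pderiv v p * M v j)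
            = (∑ v, pderiv v F * M v j) - p * (∑ v, pderiv v g * M v j) := by
          rw [h2]; ring
        rw [h4]
        exact dvd_sub h1 (dvd_mul_right p _)
      exact (hp.dvd_mul.mp h3).resolve_left hpg
    obtain ⟨v0, hv0⟩ := exists_not_dvd_pderiv p hp
    set I := Ideal.span ({p} : Set (MvPolynomial σ K)) with hI
    haveI hIp : I.IsPrime := (Ideal.span_singleton_prime hp.ne_zero).mpr hp
    set π := Ideal.Quotient.mk I with hπ
    set N := M.map π with hN
    have hrow : ∀ j, ∑ v, π (pderiv v p) * N v j = 0 := by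
      intro j
      have h5 : π (∑ v, pderiv v p * M v j) = 0 := by
        rw [Ideal.Quotient.eq_zero_iff_mem, hI]
        exact (Ideal.mem_span_singleton).mpr (hT j)
      rw [map_sum] at h5
      simpa only [map_mul, hN, Matrix.map_apply] using h5
    have hdet0 : N.det = 0 := by
      have h6 : ∑ j, (∑ v, π (pderiv v p) * N v j) * N.adjugate j v0 = 0 := by
        apply Finset.sum_eq_zero
        intro j _
        rw [hrow j, zero_mul]
      have h7 : ∑ j, (∑ v, π (pderiv v p) * N v j) * N.adjugate j v0
          = ∑ v, π (pderiv v p) * (N * N.adjugate) v v0 := by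
        have hL : ∀ j, (∑ v, π (pderiv v p) * N v j) * N.adjugate j v0
            = ∑ v, π (pderiv v p) * N v j * N.adjugate j v0 := fun j => Finset.sum_mul _ _ _
        have hR : ∀ v, π (pderiv v p) * (N * N.adjugate) v v0
            = ∑ j, π (pderiv v p) * N v j * N.adjugate j v0 := by
          intro v
          rw [Matrix.mul_apply, Finset.mul_sum]
          apply Finset.sum_congr rfl
          intro j _
          ring
        rw [Finset.sum_congr rfl (fun j _ => hL j), Finset.sum_congr rfl (fun v _ => hR v),
          Finset.sum_comm]
      rw [h7] at h6
      rw [Matrix.mul_adjugate] at h6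
      have h8 : ∑ v, π (pderiv v p) * (N.det • (1 : Matrix σ σ _)) v v0
          = π (pderiv v0 p) * N.det := by
        rw [Finset.sum_eq_single v0]
        · simp [Matrix.smul_apply, Matrix.one_apply, mul_comm]
        · intro v _ hv
          simp [Matrix.smul_apply, Matrix.one_apply, hv]
        · intro h; exact absurd (Finset.mem_univ v0) h
      rw [h8] at h6
      have h9 : π (pderiv v0 p) ≠ 0 := by
        intro h0
        rw [Ideal.Quotient.eq_zero_iff_mem, hI, Ideal.mem_span_singleton] at h0
        exact hv0 h0
      exact (mul_eq_zero.mp h6).resolve_left h9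
    have h10 : π M.det = 0 := by
      rw [RingHom.map_det]
      exact hdet0
    rw [Ideal.Quotient.eq_zero_iff_mem, hI, Ideal.mem_span_singleton] at h10
    exact h10
  have main : ∀ G : MvPolynomial σ K, G ∣ F → G ∣ M.det := by
    intro G
    induction G using UniqueFactorizationMonoid.induction_on_prime with
    | h₁ =>
      intro h
      exfalso
      rw [zero_dvd_iff] at h
      rw [h] at hsq
      exact not_squarefree_zero hsq
    | h₂ x hx => exact fun _ => hx.dvd
    | h₃ a p ha hp ih =>
      intro hpa
      have haF : a ∣ F := (dvd_mul_left a p).trans hpa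
      obtain ⟨t, ht⟩ := ih haF
      have hpF : p ∣ F := (dvd_mul_right p a).trans hpa
      have hpd := hstep p hp hpF
      have hpa' : ¬ p ∣ a := by
        intro hd
        obtain ⟨a', rfl⟩ := hd
        apply hp.not_unit
        apply hsq p
        calc p * p ∣ p * (p * a') := ⟨a', by ring⟩
          _ ∣ F := hpa
      have hpt : p ∣ t := by
        have := ht ▸ hpd
        exact (hp.dvd_mul.mp this).resolve_left hpa'
      obtain ⟨t', rfl⟩ := hpt
      exact ⟨t', by rw [ht]; ring⟩
  exact main F dvd_rfl

lemma dec_one [DecidableEq σ] (w : σ) (g : MvPolynomial σ K) :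
    ∃ h, g = X w * h + aeval (fun v => if v = w then 0 else X v) g := by
  induction g using MvPolynomial.induction_on with
  | C a => exact ⟨0, by simp [aeval_C, algebraMap_eq]⟩
  | add p q hp hq =>
    obtain ⟨h1, e1⟩ := hp
    obtain ⟨h2, e2⟩ := hq
    exact ⟨h1 + h2, by rw [map_add]; conv_lhs => rw [e1, e2]
                       ring⟩
  | mul_X p v hp =>
    obtain ⟨h, e⟩ := hp
    by_cases hv : v = w
    · subst hv
      refine ⟨p, ?_⟩
      rw [map_mul, aeval_X, if_pos rfl, mul_zero, add_zero, mul_comm]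
    · refine ⟨h * X v, ?_⟩
      rw [map_mul, aeval_X, if_neg hv]
      conv_lhs => rw [e]
      ring

lemma dec_two [DecidableEq σ] (w1 w2 : σ) (g : MvPolynomial σ K) :
    ∃ h1 h2, g = X w1 * h1 + X w2 * h2
      + aeval (fun v => if v = w1 then 0 else if v = w2 then 0 else X v) g := by
  induction g using MvPolynomial.induction_on with
  | C a => exact ⟨0, 0, by simp [aeval_C, algebraMap_eq]⟩
  | add p q hp hq =>
    obtain ⟨h1, h2, e1⟩ := hp
    obtain ⟨h3, h4, e2⟩ := hq
    exact ⟨h1 + h3, h2 + h4, by rw [map_add]; conv_lhs => rw [e1, e2]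
                                ring⟩
  | mul_X p v hp =>
    obtain ⟨h1, h2, e⟩ := hp
    by_cases hv1 : v = w1
    · subst hv1
      refine ⟨p, 0, ?_⟩
      rw [map_mul, aeval_X, if_pos rfl, mul_zero, mul_zero, add_zero, add_zero, mul_comm]
    · by_cases hv2 : v = w2
      · subst hv2
        refine ⟨0, p, ?_⟩
        rw [map_mul, aeval_X, if_neg hv1, if_pos rfl, mul_zero, mul_zero, zero_add, add_zero,
          mul_comm]
      · refine ⟨h1 * X v, h2 * X v, ?_⟩
        rw [map_mul, aeval_X, if_neg hv1, if_neg hv2]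
        conv_lhs => rw [e]
        ring


lemma prod_X_pow {ι' : Type*} (s : Finset ι') (e : ι' → σ) (g : ι' → ℕ) :
    (∏ i ∈ s, X (e i) ^ g i : MvPolynomial σ K)
      = monomial (∑ i ∈ s, Finsupp.single (e i) (g i)) 1 := by
  classical
  induction s using Finset.induction_on with
  | empty => simp
  | insert _ _ h ih =>
    rw [Finset.prod_insert h, Finset.sum_insert h, ih, X_pow_eq_monomial, monomial_mul, one_mul]

lemma X_mono (v : σ) : (X v : MvPolynomial σ K) = monomial (Finsupp.single v 1) 1 := rfl

end Stmt15

open Stmt15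

set_option maxHeartbeats 2000000

/-- the homogeneous reduced binomial `F = x^a y^α z^β + x^b`
with `α, β > 0` (and matching degrees) is NOT a free divisor: no Saito matrix
exists for it. Here the `x`-variables are indexed by `Sum.inl`, and
`y = X (Sum.inr 0)`, `z = X (Sum.inr 1)`. -/
theorem stmt_15 {K : Type*} [Field K] [CharZero K] {n : ℕ}
    (a b : Fin n → ℕ) (α β : ℕ) (hα : 0 < α) (hβ : 0 < β)
    (hdeg : (∑ i, a i) + α + β = ∑ i, b i)
    (F : MvPolynomial (Fin n ⊕ Fin 2) K)
    (hF : F = (∏ i : Fin n, X (Sum.inl i) ^ a i) * X (Sum.inr 0) ^ α *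
        X (Sum.inr 1) ^ β + (∏ i : Fin n, X (Sum.inl i) ^ b i))
    (hred : Squarefree F) :
    ¬ ∃ A : Matrix (Fin n ⊕ Fin 2) (Fin n ⊕ Fin 2)
        (MvPolynomial (Fin n ⊕ Fin 2) K),
      A.det = F ∧ ∀ j, (∑ i, pderiv i F * A i j) ∈ Ideal.span {F} := by
  classical
  rintro ⟨A, hdet, hsp⟩
  obtain ⟨α', rfl⟩ : ∃ α', α = α' + 1 := ⟨α - 1, by omega⟩
  obtain ⟨β', rfl⟩ : ∃ β', β = β' + 1 := ⟨β - 1, by omega⟩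
  have hF0 : F ≠ 0 := hred.ne_zero
  -- exponent finsupps
  set SA : (Fin n ⊕ Fin 2) →₀ ℕ := ∑ i, Finsupp.single (Sum.inl i) (a i) with hSA
  set SB : (Fin n ⊕ Fin 2) →₀ ℕ := ∑ i, Finsupp.single (Sum.inl i) (b i) with hSB
  set U : (Fin n ⊕ Fin 2) →₀ ℕ :=
    SA + Finsupp.single (Sum.inr 0) (α' + 1) + Finsupp.single (Sum.inr 1) (β' + 1) with hU
  set U' : (Fin n ⊕ Fin 2) →₀ ℕ :=
    SA + Finsupp.single (Sum.inr 0) α' + Finsupp.single (Sum.inr 1) β' with hU'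
  have hSA_inl : ∀ i, SA (Sum.inl i) = a i := by
    intro i
    rw [hSA, Finsupp.finset_sum_apply, Finset.sum_eq_single i]
    · simp
    · intro i' _ hne
      exact Finsupp.single_eq_of_ne' (by simp [hne])
    · intro h; exact absurd (Finset.mem_univ i) h
  have hSA_inr : ∀ j : Fin 2, SA (Sum.inr j) = 0 := by
    intro j
    rw [hSA, Finsupp.finset_sum_apply]
    exact Finset.sum_eq_zero fun i _ => Finsupp.single_eq_of_ne (by simp)
  have hSB_inl : ∀ i, SB (Sum.inl i) = b i := by
    intro i
    rw [hSB, Finsupp.finset_sum_apply, Finset.sum_eq_single i]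
    · simp
    · intro i' _ hne
      exact Finsupp.single_eq_of_ne' (by simp [hne])
    · intro h; exact absurd (Finset.mem_univ i) h
  have hSB_inr : ∀ j : Fin 2, SB (Sum.inr j) = 0 := by
    intro j
    rw [hSB, Finsupp.finset_sum_apply]
    exact Finset.sum_eq_zero fun i _ => Finsupp.single_eq_of_ne (by simp)
  have hU_inr0 : U (Sum.inr 0) = α' + 1 := by
    rw [hU]
    simp [Finsupp.add_apply, hSA_inr 0, Finsupp.single_apply]
  have hU_inr1 : U (Sum.inr 1) = β' + 1 := by
    rw [hU]
    simp [Finsupp.add_apply, hSA_inr 1, Finsupp.single_apply]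
  -- monomial form of F
  have hFm : F = monomial U 1 + monomial SB 1 := by
    rw [hF, hU, hSB, hSA, Stmt15.prod_X_pow, Stmt15.prod_X_pow, X_pow_eq_monomial, X_pow_eq_monomial,
      monomial_mul, monomial_mul]
    norm_num
  -- degrees
  have deg_finsum : ∀ {ι' : Type} (s : Finset ι') (f : ι' → ((Fin n ⊕ Fin 2) →₀ ℕ)),
      (∑ i ∈ s, f i).degree = ∑ i ∈ s, (f i).degree := by
    intro ι' s f
    simp only [Finsupp.degree_eq_weight_one, map_sum]
  have hdegSA : SA.degree = ∑ i, a i := by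
    rw [hSA, deg_finsum]
    exact Finset.sum_congr rfl fun i _ => deg_single _ _
  have hdegSB : SB.degree = ∑ i, b i := by
    rw [hSB, deg_finsum]
    exact Finset.sum_congr rfl fun i _ => deg_single _ _
  set D2 : ℕ := (∑ i, a i) + α' + β' with hD2
  have hdegU : U.degree = D2 + 2 := by
    rw [hU, deg_add, deg_add, deg_single, deg_single, hdegSA, hD2]
    omega
  have hdegSB2 : SB.degree = D2 + 2 := by
    rw [hdegSB, ← hdeg, hD2]; omega
  have hdegU' : U'.degree = D2 := by
    rw [hU', deg_add, deg_add, deg_single, deg_single, hdegSA, hD2]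
  -- the key monomial m0
  set m0 : MvPolynomial (Fin n ⊕ Fin 2) K := monomial U' 1 with hm0
  have hm0ne : m0 ≠ 0 := by
    rw [hm0, Ne, monomial_eq_zero]
    exact one_ne_zero
  -- partial derivatives
  have hpd : ∀ v, pderiv v F = monomial (U - Finsupp.single v 1) ((U v : K))
      + monomial (SB - Finsupp.single v 1) ((SB v : K)) := by
    intro v
    rw [hFm, map_add, pderiv_monomial, pderiv_monomial, one_mul, one_mul]
  -- finsupp identities
  have hUsub1 : U - Finsupp.single (Sum.inr 1) 1 = Finsupp.single (Sum.inr 0) 1 + U' := by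
    rw [hU, hU']
    ext v
    rcases v with i | j
    · simp [Finsupp.tsub_apply, Finsupp.add_apply, Finsupp.single_apply]
    · fin_cases j <;> simp [Finsupp.tsub_apply, Finsupp.add_apply, Finsupp.single_apply,
        hSA_inr] <;> omega
  have hUsub0 : U - Finsupp.single (Sum.inr 0) 1 = Finsupp.single (Sum.inr 1) 1 + U' := by
    rw [hU, hU']
    ext v
    rcases v with i | j
    · simp [Finsupp.tsub_apply, Finsupp.add_apply, Finsupp.single_apply]
    · fin_cases j <;> simp [Finsupp.tsub_apply, Finsupp.add_apply, Finsupp.single_apply,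
        hSA_inr] <;> omega
  have hβK : ((β' + 1 : ℕ) : K) ≠ 0 := Nat.cast_ne_zero.mpr (Nat.succ_ne_zero _)
  have hαK : ((α' + 1 : ℕ) : K) ≠ 0 := Nat.cast_ne_zero.mpr (Nat.succ_ne_zero _)
  have hG1 : pderiv (Sum.inr 1) F * C (((β' + 1 : ℕ) : K))⁻¹ = X (Sum.inr 0) * m0 := by
    rw [hpd (Sum.inr 1), hUsub1, hU_inr1, hSB_inr 1, Nat.cast_zero, monomial_zero, add_zero,
      hm0, X_mono, monomial_mul, one_mul, mul_comm, C_mul_monomial,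
      inv_mul_cancel₀ hβK]
  have hG2 : pderiv (Sum.inr 0) F * C (((α' + 1 : ℕ) : K))⁻¹ = X (Sum.inr 1) * m0 := by
    rw [hpd (Sum.inr 0), hUsub0, hU_inr0, hSB_inr 0, Nat.cast_zero, monomial_zero, add_zero,
      hm0, X_mono, monomial_mul, one_mul, mul_comm, C_mul_monomial,
      inv_mul_cancel₀ hαK]
  -- pick i0 with b i0 ≠ 0
  have hbsum : (∑ i, b i) ≠ 0 := by omega
  obtain ⟨i0, -, hb0⟩ := Finset.exists_ne_zero_of_sum_ne_zero hbsum
  -- substitution maps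
  set f1 : (Fin n ⊕ Fin 2) → MvPolynomial (Fin n ⊕ Fin 2) K :=
    fun v => if v = Sum.inr 0 then 0 else X v with hf1
  set f2 : (Fin n ⊕ Fin 2) → MvPolynomial (Fin n ⊕ Fin 2) K :=
    fun v => if v = Sum.inr 0 then 0 else if v = Sum.inr 1 then 0 else X v with hf2
  have hf1Y : aeval f1 (X (Sum.inr 0) : MvPolynomial (Fin n ⊕ Fin 2) K) = 0 := by
    rw [aeval_X, hf1]; simp
  have hf1Z : aeval f1 (X (Sum.inr 1) : MvPolynomial (Fin n ⊕ Fin 2) K) = X (Sum.inr 1) := by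
    rw [aeval_X, hf1]; simp
  have hf2Y : aeval f2 (X (Sum.inr 0) : MvPolynomial (Fin n ⊕ Fin 2) K) = 0 := by
    rw [aeval_X, hf2]; simp
  have hf2Z : aeval f2 (X (Sum.inr 1) : MvPolynomial (Fin n ⊕ Fin 2) K) = 0 := by
    rw [aeval_X, hf2]; simp
  -- aeval of pure-x monomials is nonzero
  have haux : ∀ (f : (Fin n ⊕ Fin 2) → MvPolynomial (Fin n ⊕ Fin 2) K)
      (s : (Fin n ⊕ Fin 2) →₀ ℕ) (cc : K), (∀ i : Fin n, f (Sum.inl i) = X (Sum.inl i)) →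
      (∀ j : Fin 2, s (Sum.inr j) = 0) → cc ≠ 0 → aeval f (monomial s cc) ≠ 0 := by
    intro f s cc hfl hs hcc
    rw [aeval_monomial]
    apply mul_ne_zero
    · rw [algebraMap_eq]
      intro h
      exact hcc (by rwa [← map_zero (C : K →+* MvPolynomial (Fin n ⊕ Fin 2) K), C_inj] at h)
    · rw [Finsupp.prod]
      apply Finset.prod_ne_zero_iff.mpr
      intro v hv
      rcases v with i | j
      · rw [hfl i]
        exact pow_ne_zero _ (X_ne_zero _)
      · exact absurd (hs j) (Finsupp.mem_support_iff.mp hv)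
  have haux0 : ∀ (f : (Fin n ⊕ Fin 2) → MvPolynomial (Fin n ⊕ Fin 2) K)
      (s : (Fin n ⊕ Fin 2) →₀ ℕ) (cc : K), f (Sum.inr 0) = 0 → s (Sum.inr 0) ≠ 0 →
      aeval f (monomial s cc) = 0 := by
    intro f s cc hf0 hs0
    rw [aeval_monomial, Finsupp.prod]
    have hmem : Sum.inr 0 ∈ s.support := Finsupp.mem_support_iff.mpr hs0
    rw [Finset.prod_eq_zero hmem (by rw [hf0]; exact zero_pow hs0), mul_zero]
  have hf1F : aeval f1 F ≠ 0 := by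
    rw [hFm, map_add, haux0 f1 U 1 (by rw [hf1]; simp) (by rw [hU_inr0]; omega), zero_add]
    exact haux f1 SB 1 (fun i => by rw [hf1]; simp) hSB_inr one_ne_zero
  have hf2q : aeval f2 (pderiv (Sum.inl i0) F) ≠ 0 := by
    rw [hpd (Sum.inl i0), map_add,
      haux0 f2 _ _ (by rw [hf2]; simp)
        (by rw [Finsupp.tsub_apply, hU_inr0, Finsupp.single_apply]; simp),
      zero_add]
    apply haux f2 _ _ (fun i => by rw [hf2]; simp)
    · intro j
      rw [Finsupp.tsub_apply, hSB_inr j]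
      simp
    · rw [hSB_inl i0]
      exact Nat.cast_ne_zero.mpr hb0
  -- homogeneity
  have hFhom : F.IsHomogeneous (D2 + 2) := by
    rw [hFm]
    exact (isHomogeneous_monomial 1 hdegU).add (isHomogeneous_monomial 1 hdegSB2)
  have hpdhom : ∀ v, (pderiv v F).IsHomogeneous (D2 + 1) := by
    intro v
    rw [hpd v]
    apply MvPolynomial.IsHomogeneous.add
    · rcases Nat.eq_zero_or_pos (U v) with h | h
      · rw [h, Nat.cast_zero, monomial_zero]
        exact isHomogeneous_zero _ _ _
      · apply isHomogeneous_monomial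
        have h2 := deg_sub_single (s := U) (v := v) (by omega)
        omega
    · rcases Nat.eq_zero_or_pos (SB v) with h | h
      · rw [h, Nat.cast_zero, monomial_zero]
        exact isHomogeneous_zero _ _ _
      · apply isHomogeneous_monomial
        have h2 := deg_sub_single (s := SB) (v := v) (by omega)
        omega
  have hm0hom : m0.IsHomogeneous D2 := by
    rw [hm0]; exact isHomogeneous_monomial 1 hdegU'
  -- extract the cofactors c j
  choose c hc using fun j => Ideal.mem_span_singleton.mp (hsp j)
  -- the vectors u1 u2 u3
  set u1 : (Fin n ⊕ Fin 2) → MvPolynomial (Fin n ⊕ Fin 2) K :=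
    fun v => if v = Sum.inr 1 then C (((β' + 1 : ℕ) : K))⁻¹ else 0 with hu1
  set u2 : (Fin n ⊕ Fin 2) → MvPolynomial (Fin n ⊕ Fin 2) K :=
    fun v => if v = Sum.inr 0 then C (((α' + 1 : ℕ) : K))⁻¹ else 0 with hu2
  set u3 : (Fin n ⊕ Fin 2) → MvPolynomial (Fin n ⊕ Fin 2) K :=
    fun v => if v = Sum.inl i0 then m0 else 0 with hu3
  have hsum1 : ∑ v, pderiv v F * u1 v = X (Sum.inr 0) * m0 := by
    rw [Finset.sum_eq_single (Sum.inr 1)]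
    · rw [hu1]; simpa using hG1
    · intro v _ hv
      rw [hu1]; simp [hv]
    · intro h; exact absurd (Finset.mem_univ _) h
  have hsum2 : ∑ v, pderiv v F * u2 v = X (Sum.inr 1) * m0 := by
    rw [Finset.sum_eq_single (Sum.inr 0)]
    · rw [hu2]; simpa using hG2
    · intro v _ hv
      rw [hu2]; simp [hv]
    · intro h; exact absurd (Finset.mem_univ _) h
  have hsum3 : ∑ v, pderiv v F * u3 v = pderiv (Sum.inl i0) F * m0 := by
    rw [Finset.sum_eq_single (Sum.inl i0)]
    · rw [hu3]; simp
    · intro v _ hv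
      rw [hu3]; simp [hv]
    · intro h; exact absurd (Finset.mem_univ _) h
  -- the three syzygies
  have hs12 : ∑ v, pderiv v F *
      (X (Sum.inr 1) * u1 v - X (Sum.inr 0) * u2 v) = 0 := by
    have he : ∀ v ∈ Finset.univ, pderiv v F * (X (Sum.inr 1) * u1 v - X (Sum.inr 0) * u2 v)
        = X (Sum.inr 1) * (pderiv v F * u1 v) - X (Sum.inr 0) * (pderiv v F * u2 v) :=
      fun v _ => by ring
    rw [Finset.sum_congr rfl he, Finset.sum_sub_distrib, ← Finset.mul_sum, ← Finset.mul_sum,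
      hsum1, hsum2]
    ring
  have hs13 : ∑ v, pderiv v F *
      (pderiv (Sum.inl i0) F * u1 v - X (Sum.inr 0) * u3 v) = 0 := by
    have he : ∀ v ∈ Finset.univ, pderiv v F *
        (pderiv (Sum.inl i0) F * u1 v - X (Sum.inr 0) * u3 v)
        = pderiv (Sum.inl i0) F * (pderiv v F * u1 v) - X (Sum.inr 0) * (pderiv v F * u3 v) :=
      fun v _ => by ring
    rw [Finset.sum_congr rfl he, Finset.sum_sub_distrib, ← Finset.mul_sum, ← Finset.mul_sum,
      hsum1, hsum3]
    ring
  have hs23 : ∑ v, pderiv v F *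
      (pderiv (Sum.inl i0) F * u2 v - X (Sum.inr 1) * u3 v) = 0 := by
    have he : ∀ v ∈ Finset.univ, pderiv v F *
        (pderiv (Sum.inl i0) F * u2 v - X (Sum.inr 1) * u3 v)
        = pderiv (Sum.inl i0) F * (pderiv v F * u2 v) - X (Sum.inr 1) * (pderiv v F * u3 v) :=
      fun v _ => by ring
    rw [Finset.sum_congr rfl he, Finset.sum_sub_distrib, ← Finset.mul_sum, ← Finset.mul_sum,
      hsum2, hsum3]
    ring
  -- solving A * W = s for exact syzygies s
  have hWex : ∀ s : (Fin n ⊕ Fin 2) → MvPolynomial (Fin n ⊕ Fin 2) K,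
      (∑ v, pderiv v F * s v = 0) →
      ∃ W : (Fin n ⊕ Fin 2) → MvPolynomial (Fin n ⊕ Fin 2) K,
        ∀ v, ∑ k, A v k * W k = s v := by
    intro s hs
    have hdvd : ∀ k, F ∣ Matrix.cramer A s k := by
      intro k
      rw [Matrix.cramer_apply]
      apply key_dvd_det hred
      intro j
      by_cases hjk : j = k
      · subst hjk
        have he : ∑ v, pderiv v F * (A.updateCol j s) v j = ∑ v, pderiv v F * s v :=
          Finset.sum_congr rfl fun v _ => by
            rw [Matrix.updateCol_apply, if_pos rfl]
        rw [he, hs]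
        exact dvd_zero F
      · have he : ∑ v, pderiv v F * (A.updateCol k s) v j = ∑ v, pderiv v F * A v j :=
          Finset.sum_congr rfl fun v _ => by
            rw [Matrix.updateCol_apply, if_neg hjk]
        rw [he, hc j]
        exact Dvd.intro _ rfl
    choose W hW using hdvd
    refine ⟨W, fun v => ?_⟩
    have h1 := congrFun (Matrix.mulVec_cramer A s) v
    have h2 : (A.mulVec (Matrix.cramer A s)) v = F * ∑ k, A v k * W k := by
      have e0 : (A.mulVec (Matrix.cramer A s)) v = ∑ k, A v k * Matrix.cramer A s k := rfl
      rw [e0, Finset.mul_sum]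
      exact Finset.sum_congr rfl fun k _ => by rw [hW k]; ring
    rw [h2, hdet] at h1
    have h3 : (F • s) v = F * s v := rfl
    rw [h3] at h1
    exact mul_left_cancel₀ hF0 h1
  obtain ⟨W12, hW12⟩ := hWex _ hs12
  obtain ⟨W13, hW13⟩ := hWex _ hs13
  obtain ⟨W23, hW23⟩ := hWex _ hs23
  -- Koszul relation kills the combination
  have hKcomb : ∀ k, X (Sum.inr 0) * W23 k - X (Sum.inr 1) * W13 k
      + pderiv (Sum.inl i0) F * W12 k = 0 := by
    have hAt : ∀ v, ∑ k, A v k * (X (Sum.inr 0) * W23 k - X (Sum.inr 1) * W13 k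
        + pderiv (Sum.inl i0) F * W12 k) = 0 := by
      intro v
      have he : ∀ k ∈ Finset.univ, A v k * (X (Sum.inr 0) * W23 k - X (Sum.inr 1) * W13 k
          + pderiv (Sum.inl i0) F * W12 k)
          = X (Sum.inr 0) * (A v k * W23 k) - X (Sum.inr 1) * (A v k * W13 k)
          + pderiv (Sum.inl i0) F * (A v k * W12 k) := fun k _ => by ring
      rw [Finset.sum_congr rfl he, Finset.sum_add_distrib, Finset.sum_sub_distrib,
        ← Finset.mul_sum, ← Finset.mul_sum, ← Finset.mul_sum, hW23 v, hW13 v, hW12 v]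
      ring
    intro k
    have h1 : F * (X (Sum.inr 0) * W23 k - X (Sum.inr 1) * W13 k
        + pderiv (Sum.inl i0) F * W12 k) = 0 := by
      have e1 : ∑ j, A.adjugate k j * (∑ k', A j k' * (X (Sum.inr 0) * W23 k'
          - X (Sum.inr 1) * W13 k' + pderiv (Sum.inl i0) F * W12 k')) = 0 :=
        Finset.sum_eq_zero fun j _ => by rw [hAt j, mul_zero]
      set t : (Fin n ⊕ Fin 2) → MvPolynomial (Fin n ⊕ Fin 2) K :=
        fun k' => X (Sum.inr 0) * W23 k' - X (Sum.inr 1) * W13 k'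
          + pderiv (Sum.inl i0) F * W12 k' with hts
      have e2 : ∑ j, A.adjugate k j * (∑ k', A j k' * t k')
          = ∑ k', (∑ j, A.adjugate k j * A j k') * t k' := by
        have eL : ∀ j ∈ Finset.univ, A.adjugate k j * (∑ k', A j k' * t k')
            = ∑ k', A.adjugate k j * A j k' * t k' := fun j _ => by
          rw [Finset.mul_sum]
          exact Finset.sum_congr rfl fun k' _ => by ring
        have eR : ∀ k' ∈ Finset.univ, (∑ j, A.adjugate k j * A j k') * t k'
            = ∑ j, A.adjugate k j * A j k' * t k' := fun k' _ => Finset.sum_mul _ _ _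
        rw [Finset.sum_congr rfl eL, Finset.sum_congr rfl eR, Finset.sum_comm]
      rw [e2] at e1
      have e3 : ∀ k' ∈ Finset.univ, (∑ j, A.adjugate k j * A j k') * t k'
          = (A.det • (1 : Matrix (Fin n ⊕ Fin 2) (Fin n ⊕ Fin 2)
              (MvPolynomial (Fin n ⊕ Fin 2) K))) k k' * t k' := fun k' _ => by
        rw [← Matrix.mul_apply, Matrix.adjugate_mul]
      rw [Finset.sum_congr rfl e3] at e1
      rw [Finset.sum_eq_single k] at e1
      · rw [hdet] at e1
        simpa [Matrix.smul_apply, Matrix.one_apply] using e1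
      · intro k' _ hk'
        simp [Matrix.smul_apply, Matrix.one_apply, Ne.symm hk']
      · intro h; exact absurd (Finset.mem_univ _) h
    exact (mul_eq_zero.mp h1).resolve_left hF0
  -- W12 has zero image under f2-substitution
  have hτ : ∀ k, aeval f2 (W12 k) = 0 := by
    intro k
    have h1 : pderiv (Sum.inl i0) F * W12 k
        = X (Sum.inr 1) * W13 k - X (Sum.inr 0) * W23 k := by
      linear_combination hKcomb k
    have h2 := congrArg (aeval f2) h1
    rw [map_mul, map_sub, map_mul, map_mul, hf2Y, hf2Z, zero_mul, zero_mul, sub_zero] at h2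
    exact (mul_eq_zero.mp h2).resolve_left hf2q
  have hPQ : ∀ k, ∃ p' q', W12 k = X (Sum.inr 0) * p' + X (Sum.inr 1) * q' := by
    intro k
    obtain ⟨h1, h2, e⟩ := dec_two (Sum.inr 0) (Sum.inr 1) (W12 k)
    refine ⟨h1, h2, ?_⟩
    rw [e, ← hf2, hτ k, add_zero]
  choose P Q hPQ using hPQ
  -- componentwise relation
  have hcomp : ∀ v, X (Sum.inr 1) * (u1 v - ∑ k, A v k * Q k)
      = X (Sum.inr 0) * (u2 v + ∑ k, A v k * P k) := by
    intro v
    have h1 := hW12 v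
    have h2 : ∑ k, A v k * W12 k = X (Sum.inr 0) * (∑ k, A v k * P k)
        + X (Sum.inr 1) * (∑ k, A v k * Q k) := by
      rw [Finset.mul_sum, Finset.mul_sum, ← Finset.sum_add_distrib]
      exact Finset.sum_congr rfl fun k _ => by rw [hPQ k]; ring
    rw [h2] at h1
    linear_combination -h1
  -- extract V
  have hVex : ∀ v, ∃ Vv, u1 v - ∑ k, A v k * Q k = X (Sum.inr 0) * Vv := by
    intro v
    obtain ⟨h1, e⟩ := dec_one (Sum.inr 0) (u1 v - ∑ k, A v k * Q k)
    refine ⟨h1, ?_⟩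
    have h2 := congrArg (aeval f1) (hcomp v)
    rw [map_mul, map_mul, hf1Y, hf1Z, zero_mul] at h2
    have h3 : aeval f1 (u1 v - ∑ k, A v k * Q k) = 0 := by
      rcases mul_eq_zero.mp h2 with h | h
      · exact absurd h (X_ne_zero _)
      · exact h
    rw [e, ← hf1, h3, add_zero]
  choose V hV using hVex
  -- main identity
  have hAQ : ∑ v, pderiv v F * (∑ k, A v k * Q k) = F * ∑ k, c k * Q k := by
    have e1 : ∀ v ∈ Finset.univ, pderiv v F * (∑ k, A v k * Q k)
        = ∑ k, pderiv v F * A v k * Q k := fun v _ => by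
      rw [Finset.mul_sum]
      exact Finset.sum_congr rfl fun k _ => by ring
    rw [Finset.sum_congr rfl e1, Finset.sum_comm]
    have e2 : ∀ k ∈ Finset.univ, ∑ v, pderiv v F * A v k * Q k
        = F * (c k * Q k) := fun k _ => by
      rw [← Finset.sum_mul, hc k]
      ring
    rw [Finset.sum_congr rfl e2, ← Finset.mul_sum]
  have hmain : X (Sum.inr 0) * (m0 - ∑ v, pderiv v F * V v) = F * ∑ k, c k * Q k := by
    have h1 : ∑ v, pderiv v F * (u1 v - ∑ k, A v k * Q k)
        = X (Sum.inr 0) * m0 - F * ∑ k, c k * Q k := by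
      have e1 : ∀ v ∈ Finset.univ, pderiv v F * (u1 v - ∑ k, A v k * Q k)
          = pderiv v F * u1 v - pderiv v F * (∑ k, A v k * Q k) := fun v _ => by ring
      rw [Finset.sum_congr rfl e1, Finset.sum_sub_distrib, hsum1, hAQ]
    have h2 : ∑ v, pderiv v F * (u1 v - ∑ k, A v k * Q k)
        = X (Sum.inr 0) * ∑ v, pderiv v F * V v := by
      have e1 : ∀ v ∈ Finset.univ, pderiv v F * (u1 v - ∑ k, A v k * Q k)
          = X (Sum.inr 0) * (pderiv v F * V v) := fun v _ => by
        rw [hV v]; ring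
      rw [Finset.sum_congr rfl e1, ← Finset.mul_sum]
    linear_combination h2 - h1
  -- sigma step
  obtain ⟨Sc', hSc'⟩ : ∃ Sc', (∑ k, c k * Q k) = X (Sum.inr 0) * Sc' := by
    obtain ⟨h1, e⟩ := dec_one (Sum.inr 0) (∑ k, c k * Q k)
    refine ⟨h1, ?_⟩
    have h2 := congrArg (aeval f1) hmain
    rw [map_mul, map_mul, hf1Y, zero_mul] at h2
    have h3 : aeval f1 (∑ k, c k * Q k) = 0 := by
      rcases mul_eq_zero.mp h2.symm with h | h
      · exact absurd h hf1F
      · exact h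
    rw [e, ← hf1, h3, add_zero]
  have hfinal : m0 = (∑ v, pderiv v F * V v) + F * Sc' := by
    have h1 : X (Sum.inr 0) * (m0 - (∑ v, pderiv v F * V v) - F * Sc') = 0 := by
      linear_combination hmain + F * hSc'
    have h2 := (mul_eq_zero.mp h1).resolve_left (X_ne_zero _)
    linear_combination h2
  -- homogeneous component kill
  have hhc := congrArg (homogeneousComponent D2) hfinal
  rw [homogeneousComponent_of_mem ((mem_homogeneousSubmodule _ _).mpr hm0hom),
    if_pos rfl] at hhc
  rw [map_add, map_sum] at hhc
  have hz1 : ∀ v ∈ Finset.univ, homogeneousComponent D2 (pderiv v F * V v) = 0 := fun v _ =>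
    homogeneousComponent_mul_eq_zero _ _ (hpdhom v) (by omega)
  rw [Finset.sum_congr rfl hz1, Finset.sum_const_zero,
    homogeneousComponent_mul_eq_zero _ _ hFhom (by omega), add_zero] at hhc
  exact hm0ne hhc
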